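/- Let μ₁ and μ₂ be Borel probability measures on ℝ such that μ₁((−∞,t]) ≤ μ₂((−∞,t]) for every t ∈ ℝ (i.e., μ₁ is stochastically larger than μ₂, F₁ ≤ F₂). Then ∫_ℝ (1/2)·(μ₁((t,∞)) + μ₁([t,∞))) dμ₂(t) ≥ 1/2. Consequently, if T₁ and T₂ are independent real-valued random variables whose distribution functions satisfy F₁ ≤ F₂ pointwise, then the Mann–Whitney effect satisfies p = P(T₁ > T₂) + (1/2)·P(T₁ = T₂) ≥ 1/2; that is, a stochastic order F₁ ≤ F₂ implies p ≥ 1/2. -/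

import Mathlib

open MeasureTheory ProbabilityTheory
open scoped ENNReal

section MWaux

variable (μ : Measure ℝ) [SFinite μ]

lemma mw_meas_Ioi : Measurable fun t : ℝ => μ (Set.Ioi t) := by
  have h := measurable_measure_prodMk_left (ν := μ)
    (measurableSet_lt (measurable_fst) (measurable_snd) : MeasurableSet {p : ℝ × ℝ | p.1 < p.2})
  convert h using 2
  rfl

lemma mw_meas_Ici : Measurable fun t : ℝ => μ (Set.Ici t) := by
  have h := measurable_measure_prodMk_left (ν := μ)
    (measurableSet_le (measurable_fst) (measurable_snd) : MeasurableSet {p : ℝ × ℝ | p.1 ≤ p.2})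
  convert h using 2
  rfl

lemma mw_meas_Iic : Measurable fun t : ℝ => μ (Set.Iic t) := by
  have h := measurable_measure_prodMk_left (ν := μ)
    (measurableSet_le (measurable_snd) (measurable_fst) : MeasurableSet {p : ℝ × ℝ | p.2 ≤ p.1})
  convert h using 2
  rfl

lemma mw_meas_singleton : Measurable fun t : ℝ => μ {t} := by
  have h := measurable_measure_prodMk_left (ν := μ)
    (measurableSet_eq_fun (measurable_fst) (measurable_snd) :
      MeasurableSet {p : ℝ × ℝ | p.1 = p.2})
  have hp : ∀ t : ℝ, (Prod.mk t ⁻¹' {p : ℝ × ℝ | p.1 = p.2}) = {t} := by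
    intro t; ext y; simp [eq_comm]
  simpa only [hp] using h

/-- by symmetry of `μ.prod μ` under swap. -/
lemma mw_lint_Iic_eq_Ici : ∫⁻ t, μ (Set.Iic t) ∂μ = ∫⁻ t, μ (Set.Ici t) ∂μ := by
  have hle : MeasurableSet {p : ℝ × ℝ | p.1 ≤ p.2} :=
    measurableSet_le measurable_fst measurable_snd
  have hge : MeasurableSet {p : ℝ × ℝ | p.2 ≤ p.1} :=
    measurableSet_le measurable_snd measurable_fst
  have h1 : ∫⁻ t, μ (Set.Iic t) ∂μ = (μ.prod μ) {p : ℝ × ℝ | p.2 ≤ p.1} := by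
    rw [Measure.prod_apply hge]
    exact lintegral_congr fun t => by congr 1
  have h2 : ∫⁻ t, μ (Set.Ici t) ∂μ = (μ.prod μ) {p : ℝ × ℝ | p.1 ≤ p.2} := by
    rw [Measure.prod_apply hle]
    exact lintegral_congr fun t => by congr 1
  have hswap : (μ.prod μ) {p : ℝ × ℝ | p.1 ≤ p.2} = (μ.prod μ) {p : ℝ × ℝ | p.2 ≤ p.1} := by
    conv_lhs => rw [← Measure.prod_swap (μ := μ) (ν := μ)]
    rw [Measure.map_apply measurable_swap hle]
    congr 1
  rw [h1, h2, hswap]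

end MWaux

lemma mw_Iio_mono {μ₁ μ₂ : Measure ℝ} (h : ∀ t, μ₁ (Set.Iic t) ≤ μ₂ (Set.Iic t)) (t : ℝ) :
    μ₁ (Set.Iio t) ≤ μ₂ (Set.Iio t) := by
  have hU : Set.Iio t = ⋃ n : ℕ, Set.Iic (t - 1 / (n + 1)) := by
    ext x
    simp only [Set.mem_Iio, Set.mem_iUnion, Set.mem_Iic]
    constructor
    · intro hx
      obtain ⟨n, hn⟩ := exists_nat_one_div_lt (sub_pos.mpr hx)
      exact ⟨n, by linarith⟩
    · rintro ⟨n, hn⟩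
      have hpos : (0 : ℝ) < 1 / (n + 1) := by positivity
      linarith
  have hmono : Monotone fun n : ℕ => Set.Iic (t - 1 / ((n : ℝ) + 1)) := by
    intro m n hmn
    apply Set.Iic_subset_Iic.mpr
    have hmn' : (m : ℝ) ≤ (n : ℝ) := Nat.cast_le.mpr hmn
    have h1 : (1 : ℝ) / ((n : ℝ) + 1) ≤ 1 / ((m : ℝ) + 1) := by
      apply one_div_le_one_div_of_le
      · positivity
      · linarith
    linarith
  calc μ₁ (Set.Iio t) = ⨆ n : ℕ, μ₁ (Set.Iic (t - 1 / (n + 1))) := by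
        rw [hU, hmono.directed_le.measure_iUnion]
    _ ≤ ⨆ n : ℕ, μ₂ (Set.Iic (t - 1 / (n + 1))) := iSup_mono fun n => h _
    _ = μ₂ (Set.Iio t) := by rw [hU, hmono.directed_le.measure_iUnion]

lemma mw_integrable_toReal {ν : Measure ℝ} [IsFiniteMeasure ν] {g : ℝ → ℝ≥0∞}
    (hg : Measurable g) (hb : ∀ t, g t ≤ 1) : Integrable (fun t => (g t).toReal) ν := by
  refine Integrable.mono' (integrable_const (1 : ℝ))
    hg.ennreal_toReal.aestronglyMeasurable (ae_of_all _ fun t => ?_)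
  rw [Real.norm_eq_abs, abs_of_nonneg ENNReal.toReal_nonneg]
  simpa using ENNReal.toReal_mono ENNReal.one_ne_top (hb t)

lemma mw_part1 : ∀ (μ₁ μ₂ : Measure ℝ), IsProbabilityMeasure μ₁ → IsProbabilityMeasure μ₂ →
    (∀ t : ℝ, μ₁ (Set.Iic t) ≤ μ₂ (Set.Iic t)) →
    ∫ t, (1 / 2) * ((μ₁ (Set.Ioi t)).toReal + (μ₁ (Set.Ici t)).toReal) ∂μ₂ ≥ 1 / 2 := by
  intro μ₁ μ₂ h1 h2 hF
  have hb₁Ioi : ∀ t, μ₁ (Set.Ioi t) ≤ 1 := fun t => prob_le_one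
  have hb₁Ici : ∀ t, μ₁ (Set.Ici t) ≤ 1 := fun t => prob_le_one
  have hb₂Ioi : ∀ t, μ₂ (Set.Ioi t) ≤ 1 := fun t => prob_le_one
  have hb₂Ici : ∀ t, μ₂ (Set.Ici t) ≤ 1 := fun t => prob_le_one
  -- pointwise comparison
  have hIoi : ∀ t, μ₂ (Set.Ioi t) ≤ μ₁ (Set.Ioi t) := by
    intro t
    rw [← Set.compl_Iic, prob_compl_eq_one_sub measurableSet_Iic,
      prob_compl_eq_one_sub measurableSet_Iic]
    exact tsub_le_tsub_left (hF t) 1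
  have hIci : ∀ t, μ₂ (Set.Ici t) ≤ μ₁ (Set.Ici t) := by
    intro t
    rw [← Set.compl_Iio, prob_compl_eq_one_sub measurableSet_Iio,
      prob_compl_eq_one_sub measurableSet_Iio]
    exact tsub_le_tsub_left (mw_Iio_mono hF t) 1
  -- integrability
  have hint : ∀ (μ : Measure ℝ), IsProbabilityMeasure μ →
      Integrable (fun t => (1 / 2) * ((μ (Set.Ioi t)).toReal + (μ (Set.Ici t)).toReal)) μ₂ := by
    intro μ hμ
    exact (((mw_integrable_toReal (mw_meas_Ioi μ) fun t => prob_le_one).add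
      (mw_integrable_toReal (mw_meas_Ici μ) fun t => prob_le_one)).const_mul _)
  -- value for μ₂
  have hval : ∫ t, (1 / 2) * ((μ₂ (Set.Ioi t)).toReal + (μ₂ (Set.Ici t)).toReal) ∂μ₂
      = 1 / 2 := by
    have hiIoi : ∫ t, (μ₂ (Set.Ioi t)).toReal ∂μ₂ = (∫⁻ t, μ₂ (Set.Ioi t) ∂μ₂).toReal :=
      integral_toReal (mw_meas_Ioi μ₂).aemeasurable
        (ae_of_all _ fun t => lt_of_le_of_lt (hb₂Ioi t) ENNReal.one_lt_top)
    have hiIci : ∫ t, (μ₂ (Set.Ici t)).toReal ∂μ₂ = (∫⁻ t, μ₂ (Set.Ici t) ∂μ₂).toReal :=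
      integral_toReal (mw_meas_Ici μ₂).aemeasurable
        (ae_of_all _ fun t => lt_of_le_of_lt (hb₂Ici t) ENNReal.one_lt_top)
    have hsum : ∫⁻ t, μ₂ (Set.Ioi t) ∂μ₂ + ∫⁻ t, μ₂ (Set.Ici t) ∂μ₂ = 1 := by
      rw [← mw_lint_Iic_eq_Ici, ← lintegral_add_left (mw_meas_Ioi μ₂)]
      have hpt : ∀ t : ℝ, μ₂ (Set.Ioi t) + μ₂ (Set.Iic t) = 1 := by
        intro t
        have := measure_add_measure_compl (μ := μ₂) (measurableSet_Iic (a := t))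
        rw [Set.compl_Iic] at this
        rw [add_comm, this, measure_univ]
      simp only [hpt]
      simp
    have hneIoi : ∫⁻ t, μ₂ (Set.Ioi t) ∂μ₂ ≠ ⊤ := by
      refine ne_top_of_le_ne_top (by simp : (1 : ℝ≥0∞) ≠ ⊤) ?_
      calc ∫⁻ t, μ₂ (Set.Ioi t) ∂μ₂ ≤ ∫⁻ t, μ₂ (Set.Ioi t) ∂μ₂ + ∫⁻ t, μ₂ (Set.Ici t) ∂μ₂ :=
            le_self_add
        _ = 1 := hsum
    have hneIci : ∫⁻ t, μ₂ (Set.Ici t) ∂μ₂ ≠ ⊤ := by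
      refine ne_top_of_le_ne_top (by simp : (1 : ℝ≥0∞) ≠ ⊤) ?_
      calc ∫⁻ t, μ₂ (Set.Ici t) ∂μ₂ ≤ ∫⁻ t, μ₂ (Set.Ioi t) ∂μ₂ + ∫⁻ t, μ₂ (Set.Ici t) ∂μ₂ :=
            le_add_self
        _ = 1 := hsum
    rw [integral_const_mul, integral_add
      (mw_integrable_toReal (mw_meas_Ioi μ₂) hb₂Ioi)
      (mw_integrable_toReal (mw_meas_Ici μ₂) hb₂Ici), hiIoi, hiIci,
      ← ENNReal.toReal_add hneIoi hneIci, hsum]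
    norm_num
  have hmono := integral_mono (hint μ₂ h2) (hint μ₁ h1) (fun t => by
    have h1' : (μ₂ (Set.Ioi t)).toReal ≤ (μ₁ (Set.Ioi t)).toReal :=
      ENNReal.toReal_mono (measure_ne_top _ _) (hIoi t)
    have h2' : (μ₂ (Set.Ici t)).toReal ≤ (μ₁ (Set.Ici t)).toReal :=
      ENNReal.toReal_mono (measure_ne_top _ _) (hIci t)
    dsimp only
    linarith)
  rw [hval] at hmono
  exact hmono

/-- **Stochastic order implies p ≥ 1/2.**
(1) If `μ₁, μ₂` are Borel probability measures on `ℝ` with `μ₁((−∞,t]) ≤ μ₂((−∞,t])` for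
every `t` (i.e. `F₁ ≤ F₂`), then `∫ (1/2)·(μ₁((t,∞)) + μ₁([t,∞))) dμ₂(t) ≥ 1/2`.
(2) Consequently, for independent real random variables `T₁, T₂` whose distribution
functions satisfy `F₁ ≤ F₂` pointwise, the Mann–Whitney effect satisfies
`P(T₁ > T₂) + (1/2)·P(T₁ = T₂) ≥ 1/2`. -/
theorem stochastic_order_implies_mann_whitney_effect_ge_half.{u} :
    (∀ (μ₁ μ₂ : Measure ℝ), IsProbabilityMeasure μ₁ → IsProbabilityMeasure μ₂ →
        (∀ t : ℝ, μ₁ (Set.Iic t) ≤ μ₂ (Set.Iic t)) →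
        ∫ t, (1 / 2) * ((μ₁ (Set.Ioi t)).toReal + (μ₁ (Set.Ici t)).toReal) ∂μ₂ ≥ 1 / 2)
    ∧ (∀ (Ω : Type u) [MeasurableSpace Ω] (P : Measure Ω), IsProbabilityMeasure P →
        ∀ (T₁ T₂ : Ω → ℝ), Measurable T₁ → Measurable T₂ → IndepFun T₁ T₂ P →
          (∀ t : ℝ, (P.map T₁) (Set.Iic t) ≤ (P.map T₂) (Set.Iic t)) →
          (P {ω | T₁ ω > T₂ ω}).toReal + (1 / 2) * (P {ω | T₁ ω = T₂ ω}).toReal ≥ 1 / 2) := by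
  refine ⟨mw_part1, ?_⟩
  intro Ω _ P hP T₁ T₂ hT₁ hT₂ hInd hF
  set μ₁ : Measure ℝ := P.map T₁ with hμ₁
  set μ₂ : Measure ℝ := P.map T₂ with hμ₂
  haveI hpm₁ : IsProbabilityMeasure μ₁ := Measure.isProbabilityMeasure_map hT₁.aemeasurable
  haveI hpm₂ : IsProbabilityMeasure μ₂ := Measure.isProbabilityMeasure_map hT₂.aemeasurable
  have key := mw_part1 μ₁ μ₂ hpm₁ hpm₂ hF
  have hmap : P.map (fun ω => (T₁ ω, T₂ ω)) = μ₁.prod μ₂ :=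
    (indepFun_iff_map_prod_eq_prod_map_map hT₁.aemeasurable hT₂.aemeasurable).mp hInd
  have hltmeas : MeasurableSet {p : ℝ × ℝ | p.2 < p.1} :=
    measurableSet_lt measurable_snd measurable_fst
  have heqmeas : MeasurableSet {p : ℝ × ℝ | p.1 = p.2} :=
    measurableSet_eq_fun measurable_fst measurable_snd
  -- P(T₁ > T₂) as a lintegral
  have hgt : P {ω | T₁ ω > T₂ ω} = ∫⁻ t, μ₁ (Set.Ioi t) ∂μ₂ := by
    have e1 : P {ω | T₁ ω > T₂ ω} = (μ₁.prod μ₂) {p : ℝ × ℝ | p.2 < p.1} := by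
      rw [← hmap, Measure.map_apply (hT₁.prodMk hT₂) hltmeas]
      rfl
    have e2 : (μ₁.prod μ₂) {p : ℝ × ℝ | p.2 < p.1} = (μ₂.prod μ₁) {p : ℝ × ℝ | p.1 < p.2} := by
      conv_rhs => rw [← Measure.prod_swap (μ := μ₁) (ν := μ₂)]
      rw [Measure.map_apply measurable_swap (measurableSet_lt measurable_fst measurable_snd)]
      congr 1
    rw [e1, e2, Measure.prod_apply (measurableSet_lt measurable_fst measurable_snd)]
    exact lintegral_congr fun t => by congr 1
  -- P(T₁ = T₂) as a lintegral
  have heq : P {ω | T₁ ω = T₂ ω} = ∫⁻ t, μ₁ {t} ∂μ₂ := by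
    have e1 : P {ω | T₁ ω = T₂ ω} = (μ₁.prod μ₂) {p : ℝ × ℝ | p.1 = p.2} := by
      rw [← hmap, Measure.map_apply (hT₁.prodMk hT₂) heqmeas]
      rfl
    have e2 : (μ₁.prod μ₂) {p : ℝ × ℝ | p.1 = p.2} = (μ₂.prod μ₁) {p : ℝ × ℝ | p.1 = p.2} := by
      conv_rhs => rw [← Measure.prod_swap (μ := μ₁) (ν := μ₂)]
      rw [Measure.map_apply measurable_swap heqmeas]
      congr 1; ext p; simp [Prod.swap, eq_comm]
    rw [e1, e2, Measure.prod_apply heqmeas]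
    refine lintegral_congr fun t => ?_
    congr 1; ext y; simp [eq_comm]
  -- rewrite the integrand of the key inequality
  have hIci_split : ∀ t : ℝ, μ₁ (Set.Ici t) = μ₁ {t} + μ₁ (Set.Ioi t) := by
    intro t
    have hset : Set.Ici t = {t} ∪ Set.Ioi t := by
      rw [← Set.Ioi_insert, Set.insert_eq]
    rw [hset]
    exact measure_union (by simp) measurableSet_Ioi
  have hfun : (fun t : ℝ => (1 / 2 : ℝ) * ((μ₁ (Set.Ioi t)).toReal + (μ₁ (Set.Ici t)).toReal))
      = fun t => (μ₁ (Set.Ioi t)).toReal + (1 / 2) * (μ₁ {t}).toReal := by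
    funext t
    rw [hIci_split t, ENNReal.toReal_add (measure_ne_top _ _) (measure_ne_top _ _)]
    ring
  rw [hfun] at key
  rw [integral_add (mw_integrable_toReal (mw_meas_Ioi μ₁) fun t => prob_le_one)
    ((mw_integrable_toReal (mw_meas_singleton μ₁) fun t => prob_le_one).const_mul _),
    integral_const_mul,
    integral_toReal (mw_meas_Ioi μ₁).aemeasurable
      (ae_of_all _ fun t => lt_of_le_of_lt prob_le_one ENNReal.one_lt_top),
    integral_toReal (mw_meas_singleton μ₁).aemeasurable
      (ae_of_all _ fun t => lt_of_le_of_lt prob_le_one ENNReal.one_lt_top),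
    ← hgt, ← heq] at key
  exact key
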